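/- Let K = ℂ((t)), let 𝓡 be the inverse limit of the graded polynomial rings K[x_1,...,x_n] (so 𝓡_d consists of possibly-infinite K-linear combinations of degree-d monomials in x_1, x_2, ...), and let 𝓡^♭ ⊆ 𝓡 be the subring of elements all of whose coefficients lie in t^{-n}ℂ[[t]] for some n. Suppose f ∈ 𝓡^♭_d is homogeneous and can be written f = Σ_{i=1}^r g_i h_i with g_i, h_i ∈ 𝓡 homogeneous of positive degree < d, and suppose moreover that f = Σ_{i=1}^r g'_i h'_i with g'_i, h'_i homogeneous of positive degrees, defined over K(t^{1/n}), and bounded (coefficients in t^{-m}ℂ[[t^{1/n}]] for some m). Then f has strength at most r·n in 𝓡^♭: f = Σ_{j=1}^{rn} a_j b_j with a_j, b_j ∈ 𝓡^♭ homogeneous of positive degree < d. -/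

import Mathlib

noncomputable section

/-- The base field `K = ℂ((t))`. -/
abbrev KK : Type := LaurentSeries ℂ

/-- A (possibly infinite) formal linear combination of monomials in `x_1, x_2, …` with
coefficients in `K = ℂ((t))`: an element of a graded piece of the inverse limit `𝓡` of
the polynomial rings `K[x_1, …, x_n]`. -/
abbrev El : Type := (ℕ →₀ ℕ) → KK

/-- The total degree of a monomial. -/
def mdeg (m : ℕ →₀ ℕ) : ℕ := m.sum fun _ k => k

/-- `f` is homogeneous of degree `d`. -/
def Homog (d : ℕ) (f : El) : Prop := ∀ m, mdeg m ≠ d → f m = 0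

/-- Multiplication in `𝓡` (convolution of coefficient functions). -/
def conv (f g : El) : El := fun m => ∑ p ∈ Finset.HasAntidiagonal.antidiagonal m, f p.1 * g p.2

/-- `f` lies in `𝓡^♭`: all coefficients lie in `t^{-N} ℂ[[t]]` for some `N`
(bounded denominators). -/
def Bdd (f : El) : Prop :=
  ∃ N : ℕ, ∀ (m : ℕ →₀ ℕ) (k : ℤ), k < -(N : ℤ) → (f m).coeff k = 0

/-- The substitution `t ↦ uⁿ`, embedding `ℂ((t))` into `ℂ((u))` with `u = t^{1/n}`. -/
def subst (n : ℕ) (hn : 1 ≤ n) : KK → KK :=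
  HahnSeries.embDomain
    (OrderEmbedding.ofStrictMono (fun k : ℤ => (n : ℤ) * k)
      (fun a b hab => by
        have hn' : (0 : ℤ) < (n : ℤ) := by exact_mod_cast hn
        exact mul_lt_mul_of_pos_left hab hn'))

end


noncomputable section

namespace BSaux

/-- The section operator: `(sec n hn j x).coeff k = x.coeff (n*k + j)`. -/
def sec (n : ℕ) (hn : 1 ≤ n) (j : ℤ) (x : KK) : KK where
  coeff := fun k => x.coeff ((n : ℤ) * k + j)
  isPWO_support' := by
    intro g
    obtain ⟨a, b, hab, hle⟩ := x.isPWO_support' (fun i => ⟨(n : ℤ) * (g i : ℤ) + j, (g i).2⟩)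
    refine ⟨a, b, hab, ?_⟩
    have hle' : (n : ℤ) * (g a : ℤ) + j ≤ (n : ℤ) * (g b : ℤ) + j := hle
    have h1 := add_le_add_iff_right j |>.mp hle'
    have h2 : (0 : ℤ) < (n : ℤ) := by exact_mod_cast hn
    exact le_of_mul_le_mul_left h1 h2

@[simp] lemma sec_coeff (n : ℕ) (hn : 1 ≤ n) (j : ℤ) (x : KK) (k : ℤ) :
    (sec n hn j x).coeff k = x.coeff ((n : ℤ) * k + j) := rfl

lemma sec_add (n : ℕ) (hn : 1 ≤ n) (j : ℤ) (x y : KK) :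
    sec n hn j (x + y) = sec n hn j x + sec n hn j y := by
  ext k; simp

@[simp] lemma sec_zero (n : ℕ) (hn : 1 ≤ n) (j : ℤ) : sec n hn j (0 : KK) = 0 := by
  ext k; simp

/-- `sec` as an additive monoid hom. -/
def secHom (n : ℕ) (hn : 1 ≤ n) (j : ℤ) : KK →+ KK :=
  AddMonoidHom.mk' (sec n hn j) (sec_add n hn j)

@[simp] lemma secHom_apply (n : ℕ) (hn : 1 ≤ n) (j : ℤ) (x : KK) :
    secHom n hn j x = sec n hn j x := rfl

lemma subst_coeff_mul (n : ℕ) (hn : 1 ≤ n) (x : KK) (k : ℤ) :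
    (subst n hn x).coeff ((n : ℤ) * k) = x.coeff k := by
  exact HahnSeries.embDomain_coeff (a := k)

lemma subst_coeff_not_dvd (n : ℕ) (hn : 1 ≤ n) (x : KK) (b : ℤ) (hb : ¬ ((n : ℤ) ∣ b)) :
    (subst n hn x).coeff b = 0 := by
  refine HahnSeries.embDomain_notin_range ?_
  rintro ⟨a, ha⟩
  exact hb ⟨a, ha.symm⟩

lemma sec_subst (n : ℕ) (hn : 1 ≤ n) (x : KK) : sec n hn 0 (subst n hn x) = x := by
  ext k
  rw [sec_coeff, add_zero, subst_coeff_mul]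

lemma subst_mul (n : ℕ) (hn : 1 ≤ n) (x y : KK) :
    subst n hn (x * y) = subst n hn x * subst n hn y :=
  HahnSeries.embDomain_mul _ (fun a b => mul_add _ _ _) x y

end BSaux
end

noncomputable section
namespace BSaux
open Finset

lemma single_mul_coeff (b : ℤ) (z : KK) (a : ℤ) :
    (HahnSeries.single b (1 : ℂ) * z).coeff a = z.coeff (a - b) := by
  have := HahnSeries.coeff_single_mul_add (r := (1:ℂ)) (x := z) (a := a - b) (b := b)
  rw [sub_add_cancel] at this
  rw [this, one_mul]

/-- Decomposition of a Hahn series into its `n` residue classes. -/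
lemma decomp (n : ℕ) (hn : 1 ≤ n) (x : KK) :
    x = ∑ j ∈ Finset.range n, HahnSeries.single (j : ℤ) 1 * subst n hn (sec n hn j x) := by
  ext a
  have hs : ∀ F : ℕ → KK, (∑ j ∈ Finset.range n, F j).coeff a
      = ∑ j ∈ Finset.range n, (F j).coeff a :=
    fun F => map_sum (HahnSeries.coeff.addMonoidHom a) F (Finset.range n)
  rw [hs]
  set j0 : ℕ := (a % (n : ℤ)).toNat with hj0
  have hnpos : (0 : ℤ) < (n : ℤ) := by exact_mod_cast hn
  have hmod_nonneg : 0 ≤ a % (n : ℤ) := Int.emod_nonneg a (ne_of_gt hnpos)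
  have hmod_lt : a % (n : ℤ) < n := Int.emod_lt_of_pos a hnpos
  have hj0cast : (j0 : ℤ) = a % (n : ℤ) := Int.toNat_of_nonneg hmod_nonneg
  have hj0mem : j0 ∈ Finset.range n := by
    rw [Finset.mem_range]
    omega
  symm
  rw [Finset.sum_eq_single_of_mem j0 hj0mem ?side]
  · rw [single_mul_coeff]
    have hdm := Int.mul_ediv_add_emod a (n : ℤ)
    have h1 : a - (j0 : ℤ) = (n : ℤ) * (a / (n : ℤ)) := by
      rw [hj0cast]; linarith
    rw [h1, subst_coeff_mul, sec_coeff]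
    congr 1
    rw [hj0cast]; linarith
  case side =>
    intro j hj hne
    rw [single_mul_coeff]
    refine subst_coeff_not_dvd n hn _ _ ?_
    rintro ⟨c, hc⟩
    apply hne
    have hjlt : (j : ℤ) < n := by exact_mod_cast Finset.mem_range.mp hj
    have h2 : a % (n : ℤ) = (j : ℤ) := by
      have ha : a = (j : ℤ) + (n : ℤ) * c := by linarith
      rw [ha, Int.add_mul_emod_self_left,
        Int.emod_eq_of_lt (Int.natCast_nonneg j) hjlt]
    omega

end BSaux
end

noncomputable section
namespace BSaux
open Finset

lemma sec_sum (n : ℕ) (hn : 1 ≤ n) (j : ℤ) {α : Type*} (s : Finset α) (F : α → KK) :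
    sec n hn j (∑ i ∈ s, F i) = ∑ i ∈ s, sec n hn j (F i) :=
  map_sum (secHom n hn j) F s

/-- `t^{j/n}` correction factor. -/
def tp (j : ℕ) : KK := if j = 0 then 1 else HahnSeries.single (1 : ℤ) (1 : ℂ)

lemma termlemma (n : ℕ) (hn : 1 ≤ n) (c : ℕ) (hc : c < 2 * n) (z : KK) :
    sec n hn 0 (HahnSeries.single (c : ℤ) 1 * subst n hn z)
      = if c = 0 then z else if c = n then HahnSeries.single (1 : ℤ) (1 : ℂ) * z else 0 := by
  ext k
  rw [sec_coeff, add_zero, single_mul_coeff]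
  by_cases h0 : c = 0
  · subst h0
    simp only [Nat.cast_zero, sub_zero, if_true]
    rw [subst_coeff_mul]
  · by_cases h1 : c = n
    · have h2 : (n : ℤ) * k - (c : ℕ) = (n : ℤ) * (k - 1) := by rw [h1]; push_cast; ring
      rw [h2, subst_coeff_mul]
      simp only [h0, if_false, if_pos h1]
      rw [single_mul_coeff]
    · rw [subst_coeff_not_dvd n hn _ _ ?_]
      · simp [h0, h1]
      rintro ⟨e, he⟩
      have hcq : (c : ℤ) = (n : ℤ) * (k - e) := by rw [mul_sub]; linarith
      set q := k - e with hq
      have hn1 : (1 : ℤ) ≤ n := by exact_mod_cast hn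
      have hc0 : (0 : ℤ) ≤ c := Int.natCast_nonneg c
      have hclt : (c : ℤ) < 2 * n := by exact_mod_cast hc
      rcases lt_trichotomy q 0 with h | h | h
      · nlinarith
      · apply h0
        have : (c : ℤ) = 0 := by rw [hcq, h, mul_zero]
        exact_mod_cast this
      · have h1q : (1 : ℤ) ≤ q := h
        rcases eq_or_lt_of_le h1q with h' | h'
        · apply h1
          have : (c : ℤ) = n := by rw [hcq, ← h', mul_one]
          exact_mod_cast this
        · have h2q : (2 : ℤ) ≤ q := h'
          nlinarith

lemma key (n : ℕ) (hn : 1 ≤ n) (x y : KK) :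
    sec n hn 0 (x * y) = ∑ j ∈ Finset.range n,
      sec n hn (j : ℤ) x * (tp j * sec n hn (((n - j) % n : ℕ) : ℤ) y) := by
  have hxy : x * y = ∑ j ∈ Finset.range n, ∑ l ∈ Finset.range n,
      HahnSeries.single ((j + l : ℕ) : ℤ) 1 *
        subst n hn (sec n hn (j : ℤ) x * sec n hn (l : ℤ) y) := by
    conv_lhs => rw [decomp n hn x, decomp n hn y]
    rw [Finset.sum_mul_sum]
    refine Finset.sum_congr rfl fun j _ => Finset.sum_congr rfl fun l _ => ?_
    rw [mul_mul_mul_comm, HahnSeries.single_mul_single, one_mul, ← subst_mul]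
    norm_cast
  rw [hxy, sec_sum]
  refine Finset.sum_congr rfl fun j hj => ?_
  rw [sec_sum]
  have hjn : j < n := Finset.mem_range.mp hj
  have hterm : ∀ l ∈ Finset.range n,
      sec n hn 0 (HahnSeries.single ((j + l : ℕ) : ℤ) 1 *
        subst n hn (sec n hn (j : ℤ) x * sec n hn (l : ℤ) y))
      = if j + l = 0 then sec n hn (j : ℤ) x * sec n hn (l : ℤ) y
        else if j + l = n then
          HahnSeries.single (1 : ℤ) (1 : ℂ) * (sec n hn (j : ℤ) x * sec n hn (l : ℤ) y)
        else 0 := by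
    intro l hl
    exact termlemma n hn (j + l) (by have := Finset.mem_range.mp hl; omega) _
  rw [Finset.sum_congr rfl hterm]
  by_cases hj0 : j = 0
  · subst hj0
    rw [Finset.sum_eq_single_of_mem 0 (Finset.mem_range.mpr (by omega))]
    · simp [tp, Nat.mod_self]
    · intro l hl hne
      have := Finset.mem_range.mp hl
      simp only [zero_add]
      rw [if_neg hne, if_neg (by omega)]
  · rw [Finset.sum_eq_single_of_mem (n - j) (Finset.mem_range.mpr (by omega))]
    · rw [if_neg (by omega), if_pos (by omega)]
      rw [Nat.mod_eq_of_lt (by omega)]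
      simp only [tp, if_neg hj0]
      ring
    · intro l hl hne
      have := Finset.mem_range.mp hl
      rw [if_neg (by omega), if_neg (by omega)]

end BSaux
end


noncomputable section
namespace BSaux

lemma bdd_sec (n : ℕ) (hn : 1 ≤ n) (j : ℕ) (hj : j < n) {g : El} (h : Bdd g) :
    Bdd (fun m => sec n hn (j : ℤ) (g m)) := by
  obtain ⟨N, hN⟩ := h
  refine ⟨N + n, fun m k hk => ?_⟩
  rw [sec_coeff]
  apply hN
  have h1 : (1 : ℤ) ≤ n := by exact_mod_cast hn
  have hjn : (j : ℤ) < n := by exact_mod_cast hj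
  have hk' : k < -((N : ℤ) + n) := by push_cast at hk; linarith
  have hk0 : k ≤ 0 := by linarith
  have h2 : (n : ℤ) * k ≤ k := by nlinarith
  linarith

lemma bdd_tpmul (j : ℕ) {g : El} (h : Bdd g) : Bdd (fun m => tp j * g m) := by
  obtain ⟨N, hN⟩ := h
  refine ⟨N, fun m k hk => ?_⟩
  by_cases hj : j = 0
  · have ht : tp j = 1 := by simp [tp, hj]
    rw [ht]
    simp only [one_mul]
    exact hN m k hk
  · rw [tp, if_neg hj, single_mul_coeff]
    exact hN m (k - 1) (by linarith)

end BSaux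
end


/-- Let `K = ℂ((t))`, let `𝓡` be the inverse limit of the graded polynomial rings
`K[x_1, …, x_n]`, and `𝓡^♭ ⊆ 𝓡` the subring of elements with bounded denominators.
Suppose `f ∈ 𝓡^♭` is homogeneous of degree `d` with `f = ∑_{i=1}^r gᵢ hᵢ` for
homogeneous `gᵢ, hᵢ ∈ 𝓡` of positive degree `< d`, and suppose moreover that, after the
substitution `t = uⁿ`, `f = ∑_{i=1}^r g'ᵢ h'ᵢ` with `g'ᵢ, h'ᵢ` homogeneous of positive
degree `< d`, defined over `K(t^{1/n})` and bounded.  Then `f` has strength at most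
`r·n` in `𝓡^♭`: `f = ∑_{j=1}^{rn} aⱼ bⱼ` with `aⱼ, bⱼ ∈ 𝓡^♭` homogeneous of positive
degree `< d`. -/
theorem bounded_strength
    (r n d : ℕ) (hn : 1 ≤ n) (f : El)
    (hf : Homog d f) (hfb : Bdd f)
    (h1 : ∃ g h : Fin r → El,
      (∀ i, ∃ e, 0 < e ∧ e < d ∧ Homog e (g i)) ∧
      (∀ i, ∃ e, 0 < e ∧ e < d ∧ Homog e (h i)) ∧
      f = fun m => ∑ i, conv (g i) (h i) m)
    (h2 : ∃ G H : Fin r → El,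
      (∀ i, ∃ e, 0 < e ∧ e < d ∧ Homog e (G i)) ∧
      (∀ i, ∃ e, 0 < e ∧ e < d ∧ Homog e (H i)) ∧
      (∀ i, Bdd (G i)) ∧ (∀ i, Bdd (H i)) ∧
      (fun m => subst n hn (f m)) = fun m => ∑ i, conv (G i) (H i) m) :
    ∃ a b : Fin (r * n) → El,
      (∀ j, ∃ e, 0 < e ∧ e < d ∧ Homog e (a j) ∧ Bdd (a j)) ∧
      (∀ j, ∃ e, 0 < e ∧ e < d ∧ Homog e (b j) ∧ Bdd (b j)) ∧
      f = fun m => ∑ j, conv (a j) (b j) m := by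
  classical
  obtain ⟨G, H, hG, hH, hGb, hHb, hsum⟩ := h2
  have hsum' : ∀ m, subst n hn (f m) = ∑ i, conv (G i) (H i) m := fun m => congrFun hsum m
  set A : Fin r × Fin n → El := fun p m => BSaux.sec n hn ((p.2 : ℕ) : ℤ) (G p.1 m) with hA
  set B : Fin r × Fin n → El := fun p m =>
    BSaux.tp (p.2 : ℕ) * BSaux.sec n hn (((n - (p.2 : ℕ)) % n : ℕ) : ℤ) (H p.1 m) with hB
  refine ⟨fun j => A (finProdFinEquiv.symm j), fun j => B (finProdFinEquiv.symm j), ?_, ?_, ?_⟩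
  · intro j
    obtain ⟨e, he1, he2, he3⟩ := hG (finProdFinEquiv.symm j).1
    refine ⟨e, he1, he2, ?_, ?_⟩
    · intro m hm
      simp only [hA, he3 m hm, BSaux.sec_zero]
    · exact BSaux.bdd_sec n hn _ (Fin.is_lt _) (hGb _)
  · intro j
    obtain ⟨e, he1, he2, he3⟩ := hH (finProdFinEquiv.symm j).1
    refine ⟨e, he1, he2, ?_, ?_⟩
    · intro m hm
      simp only [hB, he3 m hm, BSaux.sec_zero, mul_zero]
    · exact BSaux.bdd_tpmul _
        (BSaux.bdd_sec n hn _ (Nat.mod_lt _ (by omega)) (hHb _))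
  · funext m
    calc f m = BSaux.sec n hn 0 (subst n hn (f m)) := (BSaux.sec_subst n hn (f m)).symm
      _ = BSaux.sec n hn 0 (∑ i, conv (G i) (H i) m) := by rw [hsum' m]
      _ = ∑ i, ∑ q ∈ Finset.HasAntidiagonal.antidiagonal m, BSaux.sec n hn 0 (G i q.1 * H i q.2) := by
          rw [BSaux.sec_sum]
          exact Finset.sum_congr rfl fun i _ => BSaux.sec_sum n hn 0 _ _
      _ = ∑ i, ∑ q ∈ Finset.HasAntidiagonal.antidiagonal m, ∑ j ∈ Finset.range n,
            BSaux.sec n hn (j : ℤ) (G i q.1) *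
              (BSaux.tp j * BSaux.sec n hn (((n - j) % n : ℕ) : ℤ) (H i q.2)) :=
          Finset.sum_congr rfl fun i _ => Finset.sum_congr rfl fun q _ => BSaux.key n hn _ _
      _ = ∑ i, ∑ j ∈ Finset.range n, ∑ q ∈ Finset.HasAntidiagonal.antidiagonal m,
            BSaux.sec n hn (j : ℤ) (G i q.1) *
              (BSaux.tp j * BSaux.sec n hn (((n - j) % n : ℕ) : ℤ) (H i q.2)) :=
          Finset.sum_congr rfl fun i _ => Finset.sum_comm
      _ = ∑ i : Fin r, ∑ j : Fin n, conv (A (i, j)) (B (i, j)) m := by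
          refine Finset.sum_congr rfl fun i _ => ?_
          rw [← Fin.sum_univ_eq_sum_range]
          rfl
      _ = ∑ p : Fin r × Fin n, conv (A p) (B p) m := (Fintype.sum_prod_type (fun p => conv (A p) (B p) m)).symm
      _ = ∑ j : Fin (r * n),
            conv (A (finProdFinEquiv.symm j)) (B (finProdFinEquiv.symm j)) m :=
          (Equiv.sum_comp finProdFinEquiv.symm _).symm
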